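/- For every k ∈ ℂ, every pair of column vectors y, ỹ ∈ ℂ², and each ε ∈ {+1,−1}: P_ε·{ [a₂₁^{−ε}·b₁₁^{ε} − a₁₂^{−ε}·b₁₁^{−ε} + a₁₁^{−ε}·(b₁₂^{−ε} − b₂₁^{ε})]·I + 2·conj(k)·(b₁₁^{−ε}·|ỹ⟩ − b₁₂^{−ε}·|y⟩)·⟨y| + 2·|y⟩·[ (k²+conj(k)²)·(conj(a₁₁^ε)·⟨ỹ| − conj(a₁₂^ε)·⟨y|) − conj(k)·(conj(b₁₁^ε)·⟨ỹ| − conj(b₁₂^ε)·⟨y|) ] }·P_ε = −4k²·σ₂·P_{−ε}·[(a₁₁^{−ε}·|ỹ⟩ − a₁₂^{−ε}·|y⟩)·⟨y|]·P_{−ε}·σ₂, where P_ε = (I+εσ₃)/2. -/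
import Mathlib


open Matrix Complex ComplexConjugate

noncomputable section

abbrev M2 := Matrix (Fin 2) (Fin 2) ℂ
abbrev Vec2 := Matrix (Fin 2) (Fin 1) ℂ

def sigma3 : M2 := !![1, 0; 0, -1]
def sigma2 : M2 := !![0, -Complex.I; Complex.I, 0]

/-- ⟨u|M|v⟩ = u†Mv -/
def qform (u : Vec2) (M : M2) (v : Vec2) : ℂ := (uᴴ * M * v) 0 0

def a11 (k : ℂ) (y : Vec2) (ε : ℂ) : ℂ :=
  k * qform y (1 + ε • sigma3) y + conj k * qform y (1 - ε • sigma3) y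

def a12 (k : ℂ) (y yt : Vec2) (ε : ℂ) : ℂ :=
  k * qform y (1 + ε • sigma3) yt + conj k * qform y (1 - ε • sigma3) yt

def a21 (k : ℂ) (y yt : Vec2) (ε : ℂ) : ℂ :=
  k * qform yt (1 + ε • sigma3) y + conj k * qform yt (1 - ε • sigma3) y

def a22 (k : ℂ) (yt : Vec2) (ε : ℂ) : ℂ :=
  k * qform yt (1 + ε • sigma3) yt + conj k * qform yt (1 - ε • sigma3) yt

def b11 (k : ℂ) (y : Vec2) (ε : ℂ) : ℂ :=
  (k ^ 2 + (conj k) ^ 2) * qform y (1 + ε • sigma3) y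
    + 2 * k * conj k * qform y (1 - ε • sigma3) y

def b12 (k : ℂ) (y yt : Vec2) (ε : ℂ) : ℂ :=
  (k ^ 2 + (conj k) ^ 2) * qform y (1 + ε • sigma3) yt
    + 2 * k * conj k * qform y (1 - ε • sigma3) yt

def b21 (k : ℂ) (y yt : Vec2) (ε : ℂ) : ℂ :=
  (k ^ 2 + (conj k) ^ 2) * qform yt (1 + ε • sigma3) y
    + 2 * k * conj k * qform yt (1 - ε • sigma3) y

def c11 (k : ℂ) (y : Vec2) (ε : ℂ) : ℂ :=
  (k ^ 3 + 3 * k * (conj k) ^ 2) * qform y (1 + ε • sigma3) y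
    + ((conj k) ^ 3 + 3 * conj k * k ^ 2) * qform y (1 - ε • sigma3) y

def Δf (k : ℂ) (y yt : Vec2) (ε : ℂ) : ℂ :=
  (k ^ 2 - (conj k) ^ 2) ^ 2
      * (a21 k y yt ε * a12 k y yt ε - a11 k y ε * a22 k yt ε)
    + 2 * a11 k y ε * c11 k y (-ε) - b11 k y ε * b11 k y (-ε)
    + (k ^ 2 - (conj k) ^ 2)
      * (a21 k y yt ε * b11 k y (-ε) - a12 k y yt ε * b11 k y ε
          + a11 k y ε * (b12 k y yt ε - b21 k y yt (-ε)))

/-- P_ε = (I+εσ₃)/2 -/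
def Pe (ε : ℂ) : M2 := (1 / 2 : ℂ) • (1 + ε • sigma3)

set_option maxHeartbeats 4000000 in
theorem lemma2_second (k : ℂ) (y yt : Vec2) (ε : ℂ) (hε : ε = 1 ∨ ε = -1) :
    Pe ε * ((a21 k y yt (-ε) * b11 k y ε - a12 k y yt (-ε) * b11 k y (-ε)
          + a11 k y (-ε) * (b12 k y yt (-ε) - b21 k y yt ε)) • (1 : M2)
        + (2 * conj k) • ((b11 k y (-ε) • yt - b12 k y yt (-ε) • y) * yᴴ)
        + (2 : ℂ) • (y *
            ((k ^ 2 + (conj k) ^ 2) • (conj (a11 k y ε) • ytᴴ - conj (a12 k y yt ε) • yᴴ)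
              - conj k • (conj (b11 k y ε) • ytᴴ - conj (b12 k y yt ε) • yᴴ)))) * Pe ε
      = (-(4 * k ^ 2)) •
          (sigma2 * (Pe (-ε) * ((a11 k y (-ε) • yt - a12 k y yt (-ε) • y) * yᴴ) * Pe (-ε))
            * sigma2) := by
  rcases hε with h | h <;> subst h <;>
  · ext i j
    fin_cases i <;> fin_cases j <;>
      simp [Pe, sigma3, sigma2, a11, a12, a21, b11, b12, b21, qform,
        Matrix.mul_apply, Matrix.one_apply, Fin.sum_univ_succ,
        Matrix.conjTranspose_apply, Matrix.vecMul, dotProduct, Matrix.smul_apply,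
        Matrix.add_apply, Matrix.sub_apply, Matrix.vecHead, Matrix.vecTail,
        map_add, _root_.map_mul, map_sub, map_pow, Complex.conj_ofNat] <;>
      ((try ring_nf); (try simp only [Complex.I_sq]); ring)
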